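/- For a face F ∈ Δ^α of the form F = G^α for some face G ∈ Δ, the link of F in Δ^α equals the expansion of the link of G in Δ: link_{Δ^α}(G^α) = (link_Δ(G))^α. -/

import Mathlib

open Finset

/-- An abstract simplicial complex on vertex type `V`: a downward closed
family of finite subsets of `V`. -/
structure AbstractComplex (V : Type*) where
  faces : Set (Finset V)
  down_closed : ∀ {s t : Finset V}, s ∈ faces → t ⊆ s → t ∈ faces

namespace AbstractComplex

variable {V : Type*}

/-- A facet is a maximal face. -/
def IsFacet (Δ : AbstractComplex V) (s : Finset V) : Prop :=
  s ∈ Δ.faces ∧ ∀ t ∈ Δ.faces, s ⊆ t → s = t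

/-- A complex is pure if all facets have the same cardinality. -/
def IsPure (Δ : AbstractComplex V) : Prop :=
  ∀ s t : Finset V, Δ.IsFacet s → Δ.IsFacet t → s.card = t.card

/-- The link of a (potential) face `F`. -/
def link [DecidableEq V] (Δ : AbstractComplex V) (F : Finset V) : AbstractComplex V where
  faces := {G | G ∩ F = ∅ ∧ G ∪ F ∈ Δ.faces}
  down_closed := by
    rintro s t ⟨h1, h2⟩ hts
    refine ⟨subset_empty.mp ?_, Δ.down_closed h2 (union_subset_union hts subset_rfl)⟩
    exact h1 ▸ inter_subset_inter hts subset_rfl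

/-- The faces of cardinality `q` (i.e. dimension `q - 1`). -/
abbrev Face (Δ : AbstractComplex V) (q : ℕ) := {s : Finset V // s ∈ Δ.faces ∧ s.card = q}

/-- The simplicial boundary map on reduced chains with coefficients in `K`,
from chains spanned by faces of cardinality `q+1` to those spanned by faces of
cardinality `q`. -/
noncomputable def boundary (K : Type*) [Field K] [LinearOrder V]
    (Δ : AbstractComplex V) (q : ℕ) :
    (Δ.Face (q + 1) →₀ K) →ₗ[K] (Δ.Face q →₀ K) :=
  Finsupp.lsum K fun s => LinearMap.toSpanSingleton K _
    (∑ x ∈ s.1.attach,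
      ((-1 : K) ^ (s.1.filter (fun y => y < x.1)).card) •
        Finsupp.single (⟨s.1.erase x.1,
          Δ.down_closed s.2.1 (erase_subset _ _), by
            rw [card_erase_of_mem x.2, s.2.2]; omega⟩ : Δ.Face q) (1 : K))

/-- `Δ.RHTriv K i` says that the `i`-th reduced simplicial homology of `Δ`
with coefficients in `K` vanishes. -/
def RHTriv (K : Type*) [Field K] [LinearOrder V] (Δ : AbstractComplex V) : ℤ → Prop
  | Int.ofNat i =>
      LinearMap.ker (Δ.boundary K i) ≤ LinearMap.range (Δ.boundary K (i + 1))
  | Int.negSucc 0 => ⊤ ≤ LinearMap.range (Δ.boundary K 0)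
  | Int.negSucc (_ + 1) => True

/-- `Δ.dimLT i` means `i < dim Δ`. -/
def dimLT (Δ : AbstractComplex V) (i : ℤ) : Prop :=
  ∃ s ∈ Δ.faces, i + 2 ≤ (s.card : ℤ)

/-- Cohen–Macaulayness over `K`, via Reisner's criterion. -/
def IsCM (K : Type*) [Field K] [LinearOrder V] (Δ : AbstractComplex V) : Prop :=
  ∀ F ∈ Δ.faces, ∀ i : ℤ, (Δ.link F).dimLT i → (Δ.link F).RHTriv K i

/-- `CM_t`: pure, and the link of every face of cardinality at least `t`
is Cohen–Macaulay. -/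
def IsCMt (K : Type*) [Field K] [LinearOrder V] (t : ℕ) (Δ : AbstractComplex V) : Prop :=
  Δ.IsPure ∧ ∀ F ∈ Δ.faces, t ≤ F.card → IsCM K (Δ.link F)

/-- Buchsbaum-ness: pure and the reduced homology of the link of every nonempty
face vanishes below its dimension. -/
def IsBuchsbaum (K : Type*) [Field K] [LinearOrder V] (Δ : AbstractComplex V) : Prop :=
  Δ.IsPure ∧ ∀ G ∈ Δ.faces, G ≠ ∅ →
    ∀ i : ℤ, (Δ.link G).dimLT i → (Δ.link G).RHTriv K i

end AbstractComplex

/-- The expansion `F^α` of a finite vertex set. -/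
def expandSet {V : Type*} (α : V → ℕ) (F : Finset V) : Finset (Σ i, Fin (α i)) :=
  F.sigma fun _ => Finset.univ

namespace AbstractComplex

/-- The expansion `Δ^α` of a simplicial complex: the complex generated by the
expansions of the facets of `Δ`. -/
def expand {V : Type*} (Δ : AbstractComplex V) (α : V → ℕ) :
    AbstractComplex (Σ i, Fin (α i)) where
  faces := {σ | ∃ F, Δ.IsFacet F ∧ σ ⊆ expandSet α F}
  down_closed := fun ⟨F, hF, hsub⟩ hts => ⟨F, hF, hts.trans hsub⟩

end AbstractComplex

/-- A linear order on the expanded vertex set (lexicographic). -/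
noncomputable instance sigmaFinLinearOrder {V : Type*} [LinearOrder V] {α : V → ℕ} :
    LinearOrder (Σ i, Fin (α i)) :=
  LinearOrder.lift' (toLex : (Σ i, Fin (α i)) → Σₗ i, Fin (α i)) toLex.injective

section Aux

open Finset

lemma mem_expandSet {V : Type*} {α : V → ℕ} {s : Finset V} {x : Σ i, Fin (α i)} :
    x ∈ expandSet α s ↔ x.1 ∈ s := by
  cases x; simp [expandSet, Finset.mem_sigma]

lemma expandSet_subset_iff {V : Type*} {α : V → ℕ} (hα : ∀ i, 1 ≤ α i)
    {s t : Finset V} : expandSet α s ⊆ expandSet α t ↔ s ⊆ t := by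
  constructor
  · intro h i hi
    have := h (x := ⟨i, ⟨0, hα i⟩⟩) (mem_expandSet.mpr hi)
    exact mem_expandSet.mp this
  · intro h x hx
    exact mem_expandSet.mpr (h (mem_expandSet.mp hx))

lemma exists_facet {V : Type*} [Fintype V] (Δ : AbstractComplex V) {s : Finset V}
    (hs : s ∈ Δ.faces) : ∃ F, Δ.IsFacet F ∧ s ⊆ F := by
  classical
  obtain ⟨F, hF, hmax⟩ := Finset.exists_max_image
    ((Finset.univ : Finset (Finset V)).filter (fun t => t ∈ Δ.faces ∧ s ⊆ t))
    Finset.card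
    ⟨s, by simp [hs]⟩
  simp only [Finset.mem_filter, Finset.mem_univ, true_and] at hF hmax
  refine ⟨F, ⟨hF.1, fun t ht hFt => ?_⟩, hF.2⟩
  exact Finset.eq_of_subset_of_card_le hFt (hmax t ⟨ht, hF.2.trans hFt⟩)

end Aux

/-- `link_{Δ^α}(G^α) = (link_Δ(G))^α` for a face `G ∈ Δ`. -/
theorem link_expand {V : Type*} [Fintype V] [DecidableEq V] (Δ : AbstractComplex V)
    (α : V → ℕ) (hα : ∀ i, 1 ≤ α i) (G : Finset V) (hG : G ∈ Δ.faces) :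
    ((Δ.expand α).link (expandSet α G)).faces = ((Δ.link G).expand α).faces := by
  
  classical
  ext σ
  simp only [AbstractComplex.link, AbstractComplex.expand, Set.mem_setOf_eq]
  constructor
  · rintro ⟨hdisj, F, hF, hsub⟩
    have hGF : G ⊆ F := (expandSet_subset_iff hα).mp
      ((Finset.subset_union_right).trans hsub)
    have hσF : σ ⊆ expandSet α F := (Finset.subset_union_left).trans hsub
    have hdisj' : ∀ x ∈ σ, x.1 ∉ G := by
      intro x hx hxG
      have : x ∈ σ ∩ expandSet α G :=
        Finset.mem_inter.mpr ⟨hx, mem_expandSet.mpr hxG⟩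
      simp [hdisj] at this
    refine ⟨F \ G, ⟨⟨?_, ?_⟩, fun t ht hFt => ?_⟩, ?_⟩
    · exact Finset.subset_empty.mp fun x hx =>
        absurd (Finset.mem_inter.mp hx).2
          (Finset.mem_sdiff.mp (Finset.mem_inter.mp hx).1).2
    · have : (F \ G) ∪ G = F := Finset.sdiff_union_of_subset hGF
      rw [this]; exact hF.1
    · obtain ⟨ht1, ht2⟩ := ht
      have h1 : F ⊆ t ∪ G := by
        intro x hx
        by_cases hxG : x ∈ G
        · exact Finset.mem_union_right _ hxG
        · exact Finset.mem_union_left _ (hFt (Finset.mem_sdiff.mpr ⟨hx, hxG⟩))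
      have h2 : F = t ∪ G := hF.2 _ ht2 h1
      apply Finset.Subset.antisymm hFt
      intro x hx
      refine Finset.mem_sdiff.mpr ⟨h2 ▸ Finset.mem_union_left _ hx, fun hxG => ?_⟩
      have : x ∈ t ∩ G := Finset.mem_inter.mpr ⟨hx, hxG⟩
      simp [ht1] at this
    · intro x hx
      exact mem_expandSet.mpr
        (Finset.mem_sdiff.mpr ⟨mem_expandSet.mp (hσF hx), hdisj' x hx⟩)
  · rintro ⟨F, ⟨⟨hFdisj, hFG⟩, hFmax⟩, hsub⟩
    have hdisjFG : ∀ i ∈ F, i ∉ G := by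
      intro i hi hiG
      have : i ∈ F ∩ G := Finset.mem_inter.mpr ⟨hi, hiG⟩
      simp [hFdisj] at this
    constructor
    · apply Finset.subset_empty.mp
      intro x hx
      obtain ⟨h1, h2⟩ := Finset.mem_inter.mp hx
      exact absurd (mem_expandSet.mp h2)
        (hdisjFG _ (mem_expandSet.mp (hsub h1)))
    · obtain ⟨H, hH, hFGH⟩ := exists_facet Δ hFG
      refine ⟨H, hH, ?_⟩
      intro x hx
      rcases Finset.mem_union.mp hx with h | h
      · exact mem_expandSet.mpr
          (hFGH (Finset.mem_union_left _ (mem_expandSet.mp (hsub h))))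
      · exact mem_expandSet.mpr
          (hFGH (Finset.mem_union_right _ (mem_expandSet.mp h)))
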